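/- For every n ≥ 1, the ℂ-linear span of the set of vectors {ψ ⊗ (star∘ψ) : ψ : Fin n → ℂ with |ψ ℓ| = 1 for all ℓ} in ℂ^{Fin n × Fin n} has dimension n² − n + 1 (i.e. its finrank over ℂ equals n² − (n−1)). -/

import Mathlib

open Matrix Complex

/-- The tensor (product) vector `x ⊗ y` in `ℂ^{n²}`. -/
noncomputable def tensorVec (n : ℕ) (x y : Fin n → ℂ) : Fin n × Fin n → ℂ :=
  fun p => x p.1 * y p.2

def phaseSet (n : ℕ) : Set (Fin n × Fin n → ℂ) :=
  {v | ∃ ψ : Fin n → ℂ, (∀ ℓ, ‖ψ ℓ‖ = 1) ∧ v = tensorVec n ψ (star ∘ ψ)}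

lemma fv0 : ((0 : Fin 4) : ℕ) = 0 := rfl
lemma fv1 : ((1 : Fin 4) : ℕ) = 1 := rfl
lemma fv2 : ((2 : Fin 4) : ℕ) = 2 := rfl
lemma fv3 : ((3 : Fin 4) : ℕ) = 3 := rfl

set_option maxHeartbeats 2000000 in
lemma single_mem_span {n : ℕ} {k m : Fin n} (hkm : k ≠ m) :
    Pi.single (k, m) (1 : ℂ) ∈ Submodule.span ℂ (phaseSet n) := by
  set φ : Fin 4 → Fin 4 → Fin n → ℂ := fun j l t =>
    if t = k then I ^ (j : ℕ) else if t = m then I ^ (l : ℕ) else 1 with hφ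
  have key : Pi.single (k, m) (1 : ℂ) =
      ∑ j : Fin 4, ∑ l : Fin 4,
        ((16 : ℂ)⁻¹ * (-I) ^ (j:ℕ) * I ^ (l:ℕ)) • tensorVec n (φ j l) (star ∘ φ j l) := by
    funext p
    rw [Pi.single_apply]
    have hps : (if p = (k, m) then (1:ℂ) else 0) = if p.1 = k ∧ p.2 = m then (1:ℂ) else 0 := by
      simp [Prod.ext_iff]
    simp only [Finset.sum_apply, Pi.smul_apply, smul_eq_mul, tensorVec, hφ,
      Function.comp_apply, hps]
    by_cases h1 : p.1 = k <;> by_cases h2 : p.1 = m <;>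
      by_cases h3 : p.2 = k <;> by_cases h4 : p.2 = m <;>
      first
      | (exact absurd (h1.symm.trans h2) hkm)
      | (exact absurd (h3.symm.trans h4) hkm)
      | simp [h1, h2, h3, h4, hkm, Ne.symm hkm, Fin.sum_univ_four, fv0, fv1, fv2, fv3]
    all_goals norm_num [pow_succ, mul_assoc, Complex.I_mul_I]
    all_goals ring
  rw [key]
  refine Submodule.sum_mem _ fun j _ => Submodule.sum_mem _ fun l _ => Submodule.smul_mem _ _ ?_
  refine Submodule.subset_span ⟨φ j l, fun t => ?_, rfl⟩
  by_cases h1 : t = k <;> by_cases h2 : t = m <;> simp [hφ, h1, h2, Ne.symm hkm]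

/-- The "all diagonal entries equal" constraint map. -/
noncomputable def diagMap (n : ℕ) (d : Fin n) :
    (Fin n × Fin n → ℂ) →ₗ[ℂ] ({k : Fin n // k ≠ d} → ℂ) where
  toFun v := fun k => v (k.1, k.1) - v (d, d)
  map_add' u v := by funext k; simp; ring
  map_smul' c v := by funext k; simp [mul_sub]

lemma diagMap_surjective (n : ℕ) (d : Fin n) : Function.Surjective (diagMap n d) := by
  intro u
  refine ⟨fun p => if h : p.1 = p.2 then (if hd : p.1 = d then 0 else u ⟨p.1, hd⟩) else 0, ?_⟩
  funext k
  simp [diagMap, k.2]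

lemma span_eq_ker (n : ℕ) (d : Fin n) :
    Submodule.span ℂ (phaseSet n) = LinearMap.ker (diagMap n d) := by
  apply le_antisymm
  · rw [Submodule.span_le]
    rintro v ⟨ψ, hψ, rfl⟩
    have hone : ∀ t, ψ t * (starRingEnd ℂ) (ψ t) = 1 := by
      intro t
      have := Complex.mul_conj (ψ t)
      rw [Complex.normSq_eq_norm_sq, hψ t] at this
      simpa using this
    simp only [SetLike.mem_coe, LinearMap.mem_ker]
    funext k
    simp [diagMap, tensorVec, Function.comp, hone]
  · intro v hv
    rw [LinearMap.mem_ker] at hv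
    have hdiag : ∀ k : Fin n, v (k, k) = v (d, d) := by
      intro k
      by_cases hk : k = d
      · rw [hk]
      · have := congrFun hv ⟨k, hk⟩
        simpa [diagMap, sub_eq_zero] using this
    have hrep : v = v (d, d) • (tensorVec n (fun _ => 1) (star ∘ fun _ => 1)) +
        ∑ p : Fin n × Fin n,
          (if p.1 = p.2 then 0 else v p - v (d, d)) • (Pi.single p 1 : Fin n × Fin n → ℂ) := by
      funext q
      simp only [Pi.add_apply, Pi.smul_apply, smul_eq_mul, Finset.sum_apply,
        tensorVec, Function.comp]
      rw [Finset.sum_eq_single q]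
      · by_cases hq : q.1 = q.2
        · have : v q = v (d, d) := by
            have := hdiag q.1
            rw [show (q.1, q.1) = q from Prod.ext rfl hq] at this
            exact this
          simp [hq, this]
        · simp [hq, Pi.single_apply]
          try ring
      · intro p _ hpq
        simp [Pi.single_apply, hpq.symm]
      · simp
    rw [hrep]
    refine Submodule.add_mem _ (Submodule.smul_mem _ _ (Submodule.subset_span
      ⟨fun _ => 1, by simp, rfl⟩)) (Submodule.sum_mem _ fun p _ => ?_)
    by_cases hp : p.1 = p.2
    · simp [hp]
    · refine Submodule.smul_mem _ _ ?_
      have : p = (p.1, p.2) := rfl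
      rw [this]
      exact single_mem_span hp

theorem span_phase_vectors_dim (n : ℕ) (hn : 1 ≤ n) :
    Module.finrank ℂ
      (Submodule.span ℂ {v : Fin n × Fin n → ℂ |
        ∃ ψ : Fin n → ℂ, (∀ ℓ, ‖ψ ℓ‖ = 1) ∧ v = tensorVec n ψ (star ∘ ψ)})
      = n ^ 2 - (n - 1) := by
  have hn' : 0 < n := hn
  set d : Fin n := ⟨0, hn'⟩
  have hspan : Submodule.span ℂ {v : Fin n × Fin n → ℂ |
      ∃ ψ : Fin n → ℂ, (∀ ℓ, ‖ψ ℓ‖ = 1) ∧ v = tensorVec n ψ (star ∘ ψ)}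
      = LinearMap.ker (diagMap n d) := span_eq_ker n d
  rw [hspan]
  have hrn := LinearMap.finrank_range_add_finrank_ker (diagMap n d)
  have hrange : LinearMap.range (diagMap n d) = ⊤ :=
    LinearMap.range_eq_top.mpr (diagMap_surjective n d)
  rw [hrange] at hrn
  have htop : Module.finrank ℂ (⊤ : Submodule ℂ ({k : Fin n // k ≠ d} → ℂ))
      = n - 1 := by
    rw [finrank_top, Module.finrank_fintype_fun_eq_card]
    rw [Fintype.card_subtype_compl]
    simp
  have hdom : Module.finrank ℂ (Fin n × Fin n → ℂ) = n * n := by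
    rw [Module.finrank_fintype_fun_eq_card]
    simp
  rw [htop, hdom] at hrn
  have h2 : n ^ 2 = n * n := sq n
  omega
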